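/- Let C be an [n,k] linear code over a finite field F with locality parameter r, where 2 ≤ r < k. Then C is an (n,k,r,t)-SLRC if and only if for every nonempty subset E ⊆ [n] with |E| ≤ t there exists an index i ∈ E that has a recovering set R ⊆ [n]\E of size at most r. -/

import Mathlib

open Finset

/-- `R` is a recovering set of coordinate `i` for the linear code `C`:
`R` does not contain `i` and there are nonzero scalars `a j` (`j ∈ R`) with
`x i = ∑ j ∈ R, a j * x j` for every codeword `x ∈ C`. -/
def IsRecoveringSet {F : Type*} [Field F] {ι : Type*} [Fintype ι] [DecidableEq ι]
    (C : Submodule F (ι → F)) (i : ι) (R : Finset ι) : Prop :=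
  i ∉ R ∧ ∃ a : ι → F, (∀ j ∈ R, a j ≠ 0) ∧ ∀ x ∈ C, x i = ∑ j ∈ R, a j * x j

/-- `C` is an `(n,k,r,t)`-sequential locally repairable code: every erased set `E` of
size at most `t` can be indexed as a list `i_1, …, i_{|E|}` such that each `i_ℓ` has a
recovering set of size at most `r` contained in `Eᶜ ∪ {i_1, …, i_{ℓ-1}}`. -/
def IsSLRC {F : Type*} [Field F] {ι : Type*} [Fintype ι] [DecidableEq ι]
    (C : Submodule F (ι → F)) (r t : ℕ) : Prop :=
  ∀ E : Finset ι, E.card ≤ t →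
    ∃ L : List ι, L.Nodup ∧ L.toFinset = E ∧
      ∀ ℓ : Fin L.length, ∃ R : Finset ι,
        IsRecoveringSet C (L.get ℓ) R ∧ R.card ≤ r ∧
        R ⊆ Eᶜ ∪ (L.take ℓ.1).toFinset

/-- Lemma 1: `C` is an `(n,k,r,t)`-SLRC iff for every nonempty `E ⊆ [n]` of size at
most `t` there is `i ∈ E` having a recovering set `R ⊆ [n] \ E` of size at most `r`. -/
theorem slrc_iff_exists_recoverable {F : Type*} [Field F] [Fintype F] {n k r t : ℕ}
    (C : Submodule F (Fin n → F)) (hk : Module.finrank F C = k)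
    (hr2 : 2 ≤ r) (hrk : r < k) :
    IsSLRC C r t ↔
      ∀ E : Finset (Fin n), E.Nonempty → E.card ≤ t →
        ∃ i ∈ E, ∃ R : Finset (Fin n),
          IsRecoveringSet C i R ∧ R.card ≤ r ∧ R ⊆ Eᶜ := by
  constructor
  · intro h E hE hEt
    obtain ⟨L, hnd, hto, hrec⟩ := h E hEt
    have hLne : L ≠ [] := by
      intro h0; rw [h0] at hto; simp at hto; exact hE.ne_empty hto.symm
    have hlen : 0 < L.length := List.length_pos_iff.mpr hLne
    obtain ⟨R, hR, hRr, hRsub⟩ := hrec ⟨0, hlen⟩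
    refine ⟨L.get ⟨0, hlen⟩, ?_, R, hR, hRr, ?_⟩
    · rw [← hto]; exact List.mem_toFinset.mpr (L.get_mem _)
    · intro x hx
      have hx2 := hRsub hx
      simpa using hx2
  · intro H E
    induction E using Finset.strongInductionOn with
    | _ E ih =>
      intro hEt
      rcases E.eq_empty_or_nonempty with rfl | hne
      · exact ⟨[], by simp, by simp, fun ℓ => absurd ℓ.2 (by simp)⟩
      · obtain ⟨i, hi, R, hR, hRr, hRE⟩ := H E hne hEt
        obtain ⟨L', hnd', hto', hrec'⟩ := ih (E.erase i) (Finset.erase_ssubset hi)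
          (le_trans (Finset.card_le_card (Finset.erase_subset _ _)) hEt)
        have hiL' : i ∉ L' := by
          intro hmem
          have : i ∈ E.erase i := hto' ▸ List.mem_toFinset.mpr hmem
          simp at this
        refine ⟨i :: L', List.nodup_cons.mpr ⟨hiL', hnd'⟩, ?_, ?_⟩
        · simp [hto', Finset.insert_erase hi]
        · rintro ⟨ℓ, hℓ⟩
          match ℓ with
          | 0 =>
            refine ⟨R, hR, hRr, ?_⟩
            intro x hx
            simp only [List.take_zero, List.toFinset_nil, Finset.union_empty]
            exact hRE hx
          | Nat.succ m =>
            have hm : m < L'.length := by simpa using hℓ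
            obtain ⟨R', hR', hRr', hRsub'⟩ := hrec' ⟨m, hm⟩
            refine ⟨R', hR', hRr', ?_⟩
            intro x hx
            have hx2 := hRsub' hx
            simp only [List.take_succ_cons, List.toFinset_cons]
            simp only [Finset.mem_union, Finset.mem_compl, Finset.mem_erase,
              Finset.mem_insert] at hx2 ⊢
            by_cases hxi : x = i
            · tauto
            · rcases hx2 with h1 | h2
              · left; intro hxE; exact h1 ⟨hxi, hxE⟩
              · right; right; tauto
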